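/- Let ν = (n₁,…,n_k) be a tuple of positive integers and let ℓ be an integer with ℓ ≥ (1/2)·max{n₁+1,…,n_k+1,k}. Then the antisymmetric integer matrix B_{ν,ℓ} is equivalent to the block-diagonal matrix D_{2ℓk}(1, …, 1, n₁, …, n_k) consisting of k(ℓ−1) blocks K₁ followed by the blocks K_{n₁}, …, K_{n_k}. -/

import Mathlib

open Matrix

/-- Entry of the antisymmetric matrix `S_N` whose entries above the diagonal are all `1`
(indices are 0-based naturals). -/
def SmatE (p q : ℕ) : ℤ := if p < q then 1 else if q < p then -1 else 0

/-- The vector `v_{n,ℓ} ∈ ℤ^{2ℓ-1}` (0-based index `p`). -/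
def vvecE (n ℓ p : ℕ) : ℤ :=
  if p < n then (-1) ^ p
  else if p = 2 * ℓ - 2 ∧ Even n then 0
  else 1

/-- Entry of the 2ℓ×2ℓ block matrix `A_{n,ℓ} = [[S_{2ℓ-1}, v_{n,ℓ}], [-v_{n,ℓ}ᵀ, 0]]`
(0-based indices). -/
def AmatE (n ℓ p q : ℕ) : ℤ :=
  if p < 2 * ℓ - 1 then
    (if q < 2 * ℓ - 1 then SmatE p q else vvecE n ℓ p)
  else
    (if q < 2 * ℓ - 1 then -(vvecE n ℓ q) else 0)

/-- The antisymmetric 2ℓ×2ℓ integer matrix `A_{n,ℓ}`. -/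
def Amat (n ℓ : ℕ) : Matrix (Fin (2 * ℓ)) (Fin (2 * ℓ)) ℤ :=
  Matrix.of fun i j => AmatE n ℓ (i : ℕ) (j : ℕ)

/-- The antisymmetric `2ℓk × 2ℓk` matrix `B_{ν,ℓ}` for `ν = (ν 0, …, ν (k-1))`, defined
inductively: `B` for `k = 1` is `A_{ν 0, ℓ}`, and `B` for `k+1` is the block matrix
`[[B_k, C],[-Cᵀ, A_{ν k, ℓ}]]` where each column of `C` equals the `k`-th column
(1-based; 0-based index `k-1`) of `B_k`. -/
def Bmat (ℓ : ℕ) (ν : ℕ → ℕ) : (k : ℕ) → Matrix (Fin (2 * ℓ * k)) (Fin (2 * ℓ * k)) ℤ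
  | 0 => 0
  | k + 1 =>
    let B := Bmat ℓ ν k
    let C : Matrix (Fin (2 * ℓ * k)) (Fin (2 * ℓ)) ℤ :=
      Matrix.of fun i _ => if h : k - 1 < 2 * ℓ * k then B i ⟨k - 1, h⟩ else 0
    Matrix.reindex (finSumFinEquiv.trans (finCongr (by ring)))
      (finSumFinEquiv.trans (finCongr (by ring)))
      (Matrix.fromBlocks B C (-Cᵀ) (Amat (ν k) ℓ))

/-- The block-diagonal antisymmetric N×N matrix `D_N(n₁, …, n_k)` whose first diagonal
2×2 blocks are `K_{n₁}, …, K_{n_k}` (with `K_s = [[0,s],[-s,0]]`) and whose remaining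
entries vanish. -/
def Dmat (N : ℕ) (ns : List ℤ) : Matrix (Fin N) (Fin N) ℤ :=
  Matrix.of fun i j =>
    if (j : ℕ) = (i : ℕ) + 1 ∧ (i : ℕ) % 2 = 0 then ns.getD ((i : ℕ) / 2) 0
    else if (i : ℕ) = (j : ℕ) + 1 ∧ (j : ℕ) % 2 = 0 then -(ns.getD ((j : ℕ) / 2) 0)
    else 0

/-- Two integer matrices are equivalent if `B = T * A * Tᵀ` for some `T ∈ GL(N, ℤ)`. -/
def MatEquiv {n : Type*} [Fintype n] [DecidableEq n] (A B : Matrix n n ℤ) : Prop :=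
  ∃ T : Matrix n n ℤ, IsUnit T.det ∧ B = T * A * Tᵀ


theorem matEquiv_of_eq {n : Type*} [Fintype n] [DecidableEq n] {A B : Matrix n n ℤ}
    (h : A = B) : MatEquiv A B :=
  ⟨1, by simp, by simp [h]⟩

theorem MatEquiv.trans {n : Type*} [Fintype n] [DecidableEq n] {A B C : Matrix n n ℤ}
    (h1 : MatEquiv A B) (h2 : MatEquiv B C) : MatEquiv A C := by
  obtain ⟨T, hT, rfl⟩ := h1
  obtain ⟨S, hS, rfl⟩ := h2
  refine ⟨S * T, by rw [Matrix.det_mul]; exact hS.mul hT, ?_⟩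
  rw [Matrix.transpose_mul]
  noncomm_ring

theorem mul_reindex {m n : Type*} [Fintype m] [DecidableEq m] [Fintype n] [DecidableEq n]
    (e : m ≃ n) (A B : Matrix m m ℤ) :
    Matrix.reindex e e A * Matrix.reindex e e B = Matrix.reindex e e (A * B) := by
  simp only [Matrix.reindex_apply]
  exact Matrix.submatrix_mul_equiv A B _ e.symm _

theorem matEquiv_reindex {m n : Type*} [Fintype m] [DecidableEq m] [Fintype n] [DecidableEq n]
    (e : m ≃ n) {A B : Matrix m m ℤ} (h : MatEquiv A B) :
    MatEquiv (Matrix.reindex e e A) (Matrix.reindex e e B) := by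
  obtain ⟨T, hT, rfl⟩ := h
  refine ⟨Matrix.reindex e e T, by rwa [Matrix.det_reindex_self], ?_⟩
  rw [Matrix.transpose_reindex, mul_reindex, mul_reindex]

theorem matEquiv_fromBlocks {m n : Type*} [Fintype m] [DecidableEq m] [Fintype n] [DecidableEq n]
    {A A' : Matrix m m ℤ} {B B' : Matrix n n ℤ} (hA : MatEquiv A A') (hB : MatEquiv B B') :
    MatEquiv (Matrix.fromBlocks A 0 0 B) (Matrix.fromBlocks A' 0 0 B') := by
  obtain ⟨T, hT, rfl⟩ := hA
  obtain ⟨S, hS, rfl⟩ := hB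
  refine ⟨Matrix.fromBlocks T 0 0 S, ?_, ?_⟩
  · rw [Matrix.det_fromBlocks_zero₁₂]; exact hT.mul hS
  · rw [Matrix.fromBlocks_transpose, Matrix.fromBlocks_multiply, Matrix.fromBlocks_multiply]
    simp

def addT {N : ℕ} (i0 i1 : Fin N) (x y : Fin N → ℤ) : Matrix (Fin N) (Fin N) ℤ :=
  Matrix.of fun p q => (if p = q then 1 else 0) + x p * (if q = i0 then 1 else 0)
    + y p * (if q = i1 then 1 else 0)

theorem addT_mul {N : ℕ} (i0 i1 : Fin N) (x y : Fin N → ℤ) (A : Matrix (Fin N) (Fin N) ℤ) :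
    addT i0 i1 x y * A = Matrix.of fun p q => A p q + x p * A i0 q + y p * A i1 q := by
  ext p q
  rw [Matrix.mul_apply]
  simp [addT, add_mul, ite_mul, mul_ite, Finset.sum_add_distrib, mul_assoc]

theorem mul_addT_transpose {N : ℕ} (i0 i1 : Fin N) (x y : Fin N → ℤ)
    (B : Matrix (Fin N) (Fin N) ℤ) :
    B * (addT i0 i1 x y)ᵀ = Matrix.of fun p q => B p q + B p i0 * x q + B p i1 * y q := by
  ext p q
  rw [Matrix.mul_apply]
  simp [addT, mul_add, ite_mul, mul_ite, Finset.sum_add_distrib, mul_comm]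


theorem dmat_cast {N M : ℕ} (h : N = M) (L : List ℤ) :
    Matrix.reindex (finCongr h) (finCongr h) (Dmat N L) = Dmat M L := by
  ext i j
  simp [Dmat, Matrix.reindex_apply, Matrix.submatrix_apply]

theorem my_reindex_trans {m n o : Type*} (e : m ≃ n) (f : n ≃ o) (M : Matrix m m ℤ) :
    Matrix.reindex (e.trans f) (e.trans f) M = Matrix.reindex f f (Matrix.reindex e e M) := by
  ext i j
  simp [Matrix.reindex_apply, Matrix.submatrix_apply]

theorem dmat_append (L₁ L₂ : List ℤ) (M : ℕ) :
    Matrix.fromBlocks (Dmat (2 * L₁.length) L₁) 0 0 (Dmat M L₂)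
      = Matrix.reindex finSumFinEquiv.symm finSumFinEquiv.symm
          (Dmat (2 * L₁.length + M) (L₁ ++ L₂)) := by
  ext i j
  rcases i with i | i <;> rcases j with j | j <;>
    simp only [Matrix.reindex_apply, Matrix.submatrix_apply, Equiv.symm_symm,
      finSumFinEquiv_apply_left, finSumFinEquiv_apply_right,
      Matrix.fromBlocks_apply₁₁, Matrix.fromBlocks_apply₁₂, Matrix.fromBlocks_apply₂₁,
      Matrix.fromBlocks_apply₂₂, Dmat, Matrix.of_apply, Fin.coe_castAdd, Fin.coe_natAdd,
      Matrix.zero_apply]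
  · have hi := i.isLt
    have hj := j.isLt
    split_ifs with h1 h2 <;>
      first
        | rfl
        | (rw [List.getD_append _ _ _ _ (by omega)])
        | (exfalso; omega)
  · have hi := i.isLt
    split_ifs <;> first | rfl | (exfalso; omega)
  · have hj := j.isLt
    split_ifs <;> first | rfl | (exfalso; omega)
  · have key : ∀ a : ℕ, (L₁ ++ L₂).getD ((2 * L₁.length + a) / 2) 0 = L₂.getD (a / 2) 0 := by
      intro a
      rw [List.getD_append_right _ _ _ _ (by omega)]
      congr 1
      omega
    split_ifs <;>
      first
        | (exfalso; omega)
        | rfl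
        | (rw [key (i : ℕ)])
        | (rw [key (j : ℕ)])

theorem dmat_append' (L₁ L₂ : List ℤ) (M : ℕ) :
    Matrix.reindex finSumFinEquiv finSumFinEquiv
      (Matrix.fromBlocks (Dmat (2 * L₁.length) L₁) 0 0 (Dmat M L₂))
      = Dmat (2 * L₁.length + M) (L₁ ++ L₂) := by
  rw [dmat_append, ← Matrix.reindex_symm]
  exact (Matrix.reindex finSumFinEquiv finSumFinEquiv).apply_symm_apply _

def swapT : Matrix (Fin 4) (Fin 4) ℤ :=
  Matrix.of fun i j => if (j : ℕ) = ((i : ℕ) + 2) % 4 then 1 else 0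

theorem dmat_swap_core (a b : ℤ) : MatEquiv (Dmat 4 [a, b]) (Dmat 4 [b, a]) := by
  refine ⟨swapT, Matrix.isUnit_det_of_right_inverse (B := swapT) (by decide), ?_⟩
  ext i j
  fin_cases i <;> fin_cases j <;>
    simp (config := { decide := true }) [swapT, Dmat, Matrix.mul_apply,
      Fin.sum_univ_four, Matrix.transpose_apply]

theorem dmat_perm {L L' : List ℤ} (h : L.Perm L') :
    ∀ N, 2 * L.length ≤ N → MatEquiv (Dmat N L) (Dmat N L') := by
  induction h with
  | nil => exact fun N _ => matEquiv_of_eq rfl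
  | cons x h ih =>
    rename_i l₁ l₂
    intro N hN
    obtain ⟨M, rfl⟩ : ∃ M, N = 2 + M := ⟨N - 2, by simp only [List.length_cons] at hN; omega⟩
    have hM : 2 * l₁.length ≤ M := by simp only [List.length_cons] at hN; omega
    exact (matEquiv_of_eq (dmat_append' [x] l₁ M).symm).trans
      ((matEquiv_reindex _ (matEquiv_fromBlocks (matEquiv_of_eq rfl) (ih M hM))).trans
        (matEquiv_of_eq (dmat_append' [x] l₂ M)))
  | swap x y l =>
    intro N hN
    obtain ⟨M, rfl⟩ : ∃ M, N = 4 + M := ⟨N - 4, by simp only [List.length_cons] at hN; omega⟩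
    exact (matEquiv_of_eq (dmat_append' [y, x] l M).symm).trans
      ((matEquiv_reindex _ (matEquiv_fromBlocks (dmat_swap_core y x) (matEquiv_of_eq rfl))).trans
        (matEquiv_of_eq (dmat_append' [x, y] l M)))
  | trans h₁ h₂ ih₁ ih₂ =>
    intro N hN
    exact (ih₁ N hN).trans (ih₂ N (by rw [← h₁.length_eq]; exact hN))

def AgenE (m : ℕ) (v : ℕ → ℤ) (p q : ℕ) : ℤ :=
  if p < m then (if q < m then SmatE p q else v p) else (if q < m then -(v q) else 0)

def Agen (ℓ : ℕ) (v : ℕ → ℤ) : Matrix (Fin (2 * ℓ)) (Fin (2 * ℓ)) ℤ :=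
  Matrix.of fun i j => AgenE (2 * ℓ - 1) v (i : ℕ) (j : ℕ)

def vshift (v : ℕ → ℤ) (i : ℕ) : ℤ := v (i + 2) + v 0 - v 1

def px (ℓ : ℕ) (v : ℕ → ℤ) (p : ℕ) : ℤ :=
  if p = 2 * ℓ + 1 then v 1 else if p ≤ 1 then 0 else 1

def py (ℓ : ℕ) (v : ℕ → ℤ) (p : ℕ) : ℤ :=
  if p = 2 * ℓ + 1 then -(v 0) else if p = 1 then 0 else -1

def PTE (ℓ : ℕ) (v : ℕ → ℤ) (p q : ℕ) : ℤ :=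
  if p < 2 ∧ q < 2 then (if p = 0 ∧ q = 1 then 1 else if p = 1 ∧ q = 0 then -1 else 0)
  else if 2 ≤ p ∧ 2 ≤ q then AgenE (2 * ℓ - 1) (vshift v) (p - 2) (q - 2) else 0

theorem AgenE_eval_SS {m : ℕ} {v : ℕ → ℤ} {p q : ℕ} (hp : p < m) (hq : q < m) :
    AgenE m v p q = SmatE p q := by unfold AgenE; rw [if_pos hp, if_pos hq]

theorem AgenE_eval_Sv {m : ℕ} {v : ℕ → ℤ} {p q : ℕ} (hp : p < m) (hq : ¬ q < m) :
    AgenE m v p q = v p := by unfold AgenE; rw [if_pos hp, if_neg hq]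

theorem AgenE_eval_vS {m : ℕ} {v : ℕ → ℤ} {p q : ℕ} (hp : ¬ p < m) (hq : q < m) :
    AgenE m v p q = -(v q) := by unfold AgenE; rw [if_neg hp, if_pos hq]

theorem AgenE_eval_vv {m : ℕ} {v : ℕ → ℤ} {p q : ℕ} (hp : ¬ p < m) (hq : ¬ q < m) :
    AgenE m v p q = 0 := by unfold AgenE; rw [if_neg hp, if_neg hq]

theorem SmatE_eval_lt {p q : ℕ} (h : p < q) : SmatE p q = 1 := by unfold SmatE; rw [if_pos h]

theorem SmatE_eval_gt {p q : ℕ} (h : q < p) : SmatE p q = -1 := by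
  unfold SmatE; rw [if_neg (by omega), if_pos h]

theorem SmatE_eval_eq {p q : ℕ} (h : p = q) : SmatE p q = 0 := by
  unfold SmatE; rw [if_neg (by omega), if_neg (by omega)]

theorem SmatE_sub {p q : ℕ} (hp : 2 ≤ p) (hq : 2 ≤ q) : SmatE (p - 2) (q - 2) = SmatE p q := by
  unfold SmatE; split_ifs <;> omega

theorem px_small {ℓ : ℕ} {v : ℕ → ℤ} {p : ℕ} (h1 : p ≤ 1) (h2 : p < 2 * ℓ + 1) :
    px ℓ v p = 0 := by unfold px; rw [if_neg (by omega), if_pos h1]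

theorem px_mid {ℓ : ℕ} {v : ℕ → ℤ} {p : ℕ} (h1 : 2 ≤ p) (h2 : p < 2 * ℓ + 1) :
    px ℓ v p = 1 := by unfold px; rw [if_neg (by omega), if_neg (by omega)]

theorem px_last {ℓ : ℕ} {v : ℕ → ℤ} : px ℓ v (2 * ℓ + 1) = v 1 := by
  unfold px; rw [if_pos rfl]

theorem py_m {ℓ : ℕ} {v : ℕ → ℤ} {p : ℕ} (h1 : p ≠ 1) (h2 : p < 2 * ℓ + 1) :
    py ℓ v p = -1 := by unfold py; rw [if_neg (by omega), if_neg h1]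

theorem py_one {ℓ : ℕ} {v : ℕ → ℤ} (hl : 1 ≤ ℓ) : py ℓ v 1 = 0 := by
  unfold py; rw [if_neg (by omega), if_pos rfl]

theorem py_last {ℓ : ℕ} {v : ℕ → ℤ} : py ℓ v (2 * ℓ + 1) = -(v 0) := by
  unfold py; rw [if_pos rfl]

theorem peel_entry (ℓ : ℕ) (hl : 1 ≤ ℓ) (v : ℕ → ℤ) (p q : ℕ)
    (hp : p < 2 * ℓ + 2) (hq : q < 2 * ℓ + 2) :
    AgenE (2 * ℓ + 1) v p q + px ℓ v p * AgenE (2 * ℓ + 1) v 0 q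
      + py ℓ v p * AgenE (2 * ℓ + 1) v 1 q
      + (AgenE (2 * ℓ + 1) v p 0 + px ℓ v p * AgenE (2 * ℓ + 1) v 0 0
          + py ℓ v p * AgenE (2 * ℓ + 1) v 1 0) * px ℓ v q
      + (AgenE (2 * ℓ + 1) v p 1 + px ℓ v p * AgenE (2 * ℓ + 1) v 0 1
          + py ℓ v p * AgenE (2 * ℓ + 1) v 1 1) * py ℓ v q
      = PTE ℓ v p q := by
  have h00 : AgenE (2 * ℓ + 1) v 0 0 = 0 := by
    rw [AgenE_eval_SS (by omega) (by omega), SmatE_eval_eq rfl]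
  have h01 : AgenE (2 * ℓ + 1) v 0 1 = 1 := by
    rw [AgenE_eval_SS (by omega) (by omega), SmatE_eval_lt (by omega)]
  have h10 : AgenE (2 * ℓ + 1) v 1 0 = -1 := by
    rw [AgenE_eval_SS (by omega) (by omega), SmatE_eval_gt (by omega)]
  have h11 : AgenE (2 * ℓ + 1) v 1 1 = 0 := by
    rw [AgenE_eval_SS (by omega) (by omega), SmatE_eval_eq rfl]
  rcases (show p = 0 ∨ p = 1 ∨ (2 ≤ p ∧ p < 2 * ℓ + 1) ∨ p = 2 * ℓ + 1 by omega)
    with rfl | rfl | ⟨hp2, hpm⟩ | rfl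
  · rcases (show q = 0 ∨ q = 1 ∨ (2 ≤ q ∧ q < 2 * ℓ + 1) ∨ q = 2 * ℓ + 1 by omega)
        with rfl | rfl | ⟨hq2, hqm⟩ | rfl
    · have e1 : AgenE (2 * ℓ + 1) v 0 0 = 0 := by rw [AgenE_eval_SS (by omega) (by omega), SmatE_eval_eq rfl]
      have e2 : AgenE (2 * ℓ + 1) v 0 0 = 0 := by rw [AgenE_eval_SS (by omega) (by omega), SmatE_eval_eq rfl]
      have e3 : AgenE (2 * ℓ + 1) v 1 0 = -1 := by rw [AgenE_eval_SS (by omega) (by omega), SmatE_eval_gt (by omega)]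
      have e4 : AgenE (2 * ℓ + 1) v 0 0 = 0 := by rw [AgenE_eval_SS (by omega) (by omega), SmatE_eval_eq rfl]
      have e5 : AgenE (2 * ℓ + 1) v 0 1 = 1 := by rw [AgenE_eval_SS (by omega) (by omega), SmatE_eval_lt (by omega)]
      have f1 : px ℓ v 0 = 0 := px_small (by omega) (by omega)
      have f2 : py ℓ v 0 = -1 := py_m (by omega) (by omega)
      have f3 : px ℓ v 0 = 0 := px_small (by omega) (by omega)
      have f4 : py ℓ v 0 = -1 := py_m (by omega) (by omega)
      have g : PTE ℓ v 0 0 = 0 := by norm_num [PTE]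
      simp only [e1, e2, e3, e4, e5, h00, h01, h10, h11, f1, f2, f3, f4, g]
      ring
    · have e1 : AgenE (2 * ℓ + 1) v 0 1 = 1 := by rw [AgenE_eval_SS (by omega) (by omega), SmatE_eval_lt (by omega)]
      have e2 : AgenE (2 * ℓ + 1) v 0 1 = 1 := by rw [AgenE_eval_SS (by omega) (by omega), SmatE_eval_lt (by omega)]
      have e3 : AgenE (2 * ℓ + 1) v 1 1 = 0 := by rw [AgenE_eval_SS (by omega) (by omega), SmatE_eval_eq rfl]
      have e4 : AgenE (2 * ℓ + 1) v 0 0 = 0 := by rw [AgenE_eval_SS (by omega) (by omega), SmatE_eval_eq rfl]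
      have e5 : AgenE (2 * ℓ + 1) v 0 1 = 1 := by rw [AgenE_eval_SS (by omega) (by omega), SmatE_eval_lt (by omega)]
      have f1 : px ℓ v 0 = 0 := px_small (by omega) (by omega)
      have f2 : py ℓ v 0 = -1 := py_m (by omega) (by omega)
      have f3 : px ℓ v 1 = 0 := px_small (by omega) (by omega)
      have f4 : py ℓ v 1 = 0 := py_one hl
      have g : PTE ℓ v 0 1 = 1 := by norm_num [PTE]
      simp only [e1, e2, e3, e4, e5, h00, h01, h10, h11, f1, f2, f3, f4, g]
      ring
    · have e1 : AgenE (2 * ℓ + 1) v 0 q = 1 := by rw [AgenE_eval_SS (by omega) (by omega), SmatE_eval_lt (by omega)]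
      have e2 : AgenE (2 * ℓ + 1) v 0 q = 1 := by rw [AgenE_eval_SS (by omega) (by omega), SmatE_eval_lt (by omega)]
      have e3 : AgenE (2 * ℓ + 1) v 1 q = 1 := by rw [AgenE_eval_SS (by omega) (by omega), SmatE_eval_lt (by omega)]
      have e4 : AgenE (2 * ℓ + 1) v 0 0 = 0 := by rw [AgenE_eval_SS (by omega) (by omega), SmatE_eval_eq rfl]
      have e5 : AgenE (2 * ℓ + 1) v 0 1 = 1 := by rw [AgenE_eval_SS (by omega) (by omega), SmatE_eval_lt (by omega)]
      have f1 : px ℓ v 0 = 0 := px_small (by omega) (by omega)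
      have f2 : py ℓ v 0 = -1 := py_m (by omega) (by omega)
      have f3 : px ℓ v q = 1 := px_mid (by omega) (by omega)
      have f4 : py ℓ v q = -1 := py_m (by omega) (by omega)
      have g : PTE ℓ v 0 q = 0 := by
        simp only [PTE]; rw [if_neg (by omega), if_neg (by omega)]
      simp only [e1, e2, e3, e4, e5, h00, h01, h10, h11, f1, f2, f3, f4, g]
      ring
    · have e1 : AgenE (2 * ℓ + 1) v 0 (2 * ℓ + 1) = v 0 := by rw [AgenE_eval_Sv (by omega) (by omega)]
      have e2 : AgenE (2 * ℓ + 1) v 0 (2 * ℓ + 1) = v 0 := by rw [AgenE_eval_Sv (by omega) (by omega)]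
      have e3 : AgenE (2 * ℓ + 1) v 1 (2 * ℓ + 1) = v 1 := by rw [AgenE_eval_Sv (by omega) (by omega)]
      have e4 : AgenE (2 * ℓ + 1) v 0 0 = 0 := by rw [AgenE_eval_SS (by omega) (by omega), SmatE_eval_eq rfl]
      have e5 : AgenE (2 * ℓ + 1) v 0 1 = 1 := by rw [AgenE_eval_SS (by omega) (by omega), SmatE_eval_lt (by omega)]
      have f1 : px ℓ v 0 = 0 := px_small (by omega) (by omega)
      have f2 : py ℓ v 0 = -1 := py_m (by omega) (by omega)
      have f3 : px ℓ v (2 * ℓ + 1) = v 1 := px_last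
      have f4 : py ℓ v (2 * ℓ + 1) = -(v 0) := py_last
      have g : PTE ℓ v 0 (2 * ℓ + 1) = 0 := by
        simp only [PTE]; rw [if_neg (by omega), if_neg (by omega)]
      simp only [e1, e2, e3, e4, e5, h00, h01, h10, h11, f1, f2, f3, f4, g]
      ring
  · rcases (show q = 0 ∨ q = 1 ∨ (2 ≤ q ∧ q < 2 * ℓ + 1) ∨ q = 2 * ℓ + 1 by omega)
        with rfl | rfl | ⟨hq2, hqm⟩ | rfl
    · have e1 : AgenE (2 * ℓ + 1) v 1 0 = -1 := by rw [AgenE_eval_SS (by omega) (by omega), SmatE_eval_gt (by omega)]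
      have e2 : AgenE (2 * ℓ + 1) v 0 0 = 0 := by rw [AgenE_eval_SS (by omega) (by omega), SmatE_eval_eq rfl]
      have e3 : AgenE (2 * ℓ + 1) v 1 0 = -1 := by rw [AgenE_eval_SS (by omega) (by omega), SmatE_eval_gt (by omega)]
      have e4 : AgenE (2 * ℓ + 1) v 1 0 = -1 := by rw [AgenE_eval_SS (by omega) (by omega), SmatE_eval_gt (by omega)]
      have e5 : AgenE (2 * ℓ + 1) v 1 1 = 0 := by rw [AgenE_eval_SS (by omega) (by omega), SmatE_eval_eq rfl]
      have f1 : px ℓ v 1 = 0 := px_small (by omega) (by omega)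
      have f2 : py ℓ v 1 = 0 := py_one hl
      have f3 : px ℓ v 0 = 0 := px_small (by omega) (by omega)
      have f4 : py ℓ v 0 = -1 := py_m (by omega) (by omega)
      have g : PTE ℓ v 1 0 = -1 := by norm_num [PTE]
      simp only [e1, e2, e3, e4, e5, h00, h01, h10, h11, f1, f2, f3, f4, g]
      ring
    · have e1 : AgenE (2 * ℓ + 1) v 1 1 = 0 := by rw [AgenE_eval_SS (by omega) (by omega), SmatE_eval_eq rfl]
      have e2 : AgenE (2 * ℓ + 1) v 0 1 = 1 := by rw [AgenE_eval_SS (by omega) (by omega), SmatE_eval_lt (by omega)]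
      have e3 : AgenE (2 * ℓ + 1) v 1 1 = 0 := by rw [AgenE_eval_SS (by omega) (by omega), SmatE_eval_eq rfl]
      have e4 : AgenE (2 * ℓ + 1) v 1 0 = -1 := by rw [AgenE_eval_SS (by omega) (by omega), SmatE_eval_gt (by omega)]
      have e5 : AgenE (2 * ℓ + 1) v 1 1 = 0 := by rw [AgenE_eval_SS (by omega) (by omega), SmatE_eval_eq rfl]
      have f1 : px ℓ v 1 = 0 := px_small (by omega) (by omega)
      have f2 : py ℓ v 1 = 0 := py_one hl
      have f3 : px ℓ v 1 = 0 := px_small (by omega) (by omega)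
      have f4 : py ℓ v 1 = 0 := py_one hl
      have g : PTE ℓ v 1 1 = 0 := by norm_num [PTE]
      simp only [e1, e2, e3, e4, e5, h00, h01, h10, h11, f1, f2, f3, f4, g]
      ring
    · have e1 : AgenE (2 * ℓ + 1) v 1 q = 1 := by rw [AgenE_eval_SS (by omega) (by omega), SmatE_eval_lt (by omega)]
      have e2 : AgenE (2 * ℓ + 1) v 0 q = 1 := by rw [AgenE_eval_SS (by omega) (by omega), SmatE_eval_lt (by omega)]
      have e3 : AgenE (2 * ℓ + 1) v 1 q = 1 := by rw [AgenE_eval_SS (by omega) (by omega), SmatE_eval_lt (by omega)]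
      have e4 : AgenE (2 * ℓ + 1) v 1 0 = -1 := by rw [AgenE_eval_SS (by omega) (by omega), SmatE_eval_gt (by omega)]
      have e5 : AgenE (2 * ℓ + 1) v 1 1 = 0 := by rw [AgenE_eval_SS (by omega) (by omega), SmatE_eval_eq rfl]
      have f1 : px ℓ v 1 = 0 := px_small (by omega) (by omega)
      have f2 : py ℓ v 1 = 0 := py_one hl
      have f3 : px ℓ v q = 1 := px_mid (by omega) (by omega)
      have f4 : py ℓ v q = -1 := py_m (by omega) (by omega)
      have g : PTE ℓ v 1 q = 0 := by
        simp only [PTE]; rw [if_neg (by omega), if_neg (by omega)]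
      simp only [e1, e2, e3, e4, e5, h00, h01, h10, h11, f1, f2, f3, f4, g]
      ring
    · have e1 : AgenE (2 * ℓ + 1) v 1 (2 * ℓ + 1) = v 1 := by rw [AgenE_eval_Sv (by omega) (by omega)]
      have e2 : AgenE (2 * ℓ + 1) v 0 (2 * ℓ + 1) = v 0 := by rw [AgenE_eval_Sv (by omega) (by omega)]
      have e3 : AgenE (2 * ℓ + 1) v 1 (2 * ℓ + 1) = v 1 := by rw [AgenE_eval_Sv (by omega) (by omega)]
      have e4 : AgenE (2 * ℓ + 1) v 1 0 = -1 := by rw [AgenE_eval_SS (by omega) (by omega), SmatE_eval_gt (by omega)]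
      have e5 : AgenE (2 * ℓ + 1) v 1 1 = 0 := by rw [AgenE_eval_SS (by omega) (by omega), SmatE_eval_eq rfl]
      have f1 : px ℓ v 1 = 0 := px_small (by omega) (by omega)
      have f2 : py ℓ v 1 = 0 := py_one hl
      have f3 : px ℓ v (2 * ℓ + 1) = v 1 := px_last
      have f4 : py ℓ v (2 * ℓ + 1) = -(v 0) := py_last
      have g : PTE ℓ v 1 (2 * ℓ + 1) = 0 := by
        simp only [PTE]; rw [if_neg (by omega), if_neg (by omega)]
      simp only [e1, e2, e3, e4, e5, h00, h01, h10, h11, f1, f2, f3, f4, g]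
      ring
  · rcases (show q = 0 ∨ q = 1 ∨ (2 ≤ q ∧ q < 2 * ℓ + 1) ∨ q = 2 * ℓ + 1 by omega)
        with rfl | rfl | ⟨hq2, hqm⟩ | rfl
    · have e1 : AgenE (2 * ℓ + 1) v p 0 = -1 := by rw [AgenE_eval_SS (by omega) (by omega), SmatE_eval_gt (by omega)]
      have e2 : AgenE (2 * ℓ + 1) v 0 0 = 0 := by rw [AgenE_eval_SS (by omega) (by omega), SmatE_eval_eq rfl]
      have e3 : AgenE (2 * ℓ + 1) v 1 0 = -1 := by rw [AgenE_eval_SS (by omega) (by omega), SmatE_eval_gt (by omega)]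
      have e4 : AgenE (2 * ℓ + 1) v p 0 = -1 := by rw [AgenE_eval_SS (by omega) (by omega), SmatE_eval_gt (by omega)]
      have e5 : AgenE (2 * ℓ + 1) v p 1 = -1 := by rw [AgenE_eval_SS (by omega) (by omega), SmatE_eval_gt (by omega)]
      have f1 : px ℓ v p = 1 := px_mid (by omega) (by omega)
      have f2 : py ℓ v p = -1 := py_m (by omega) (by omega)
      have f3 : px ℓ v 0 = 0 := px_small (by omega) (by omega)
      have f4 : py ℓ v 0 = -1 := py_m (by omega) (by omega)
      have g : PTE ℓ v p 0 = 0 := by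
        simp only [PTE]; rw [if_neg (by omega), if_neg (by omega)]
      simp only [e1, e2, e3, e4, e5, h00, h01, h10, h11, f1, f2, f3, f4, g]
      ring
    · have e1 : AgenE (2 * ℓ + 1) v p 1 = -1 := by rw [AgenE_eval_SS (by omega) (by omega), SmatE_eval_gt (by omega)]
      have e2 : AgenE (2 * ℓ + 1) v 0 1 = 1 := by rw [AgenE_eval_SS (by omega) (by omega), SmatE_eval_lt (by omega)]
      have e3 : AgenE (2 * ℓ + 1) v 1 1 = 0 := by rw [AgenE_eval_SS (by omega) (by omega), SmatE_eval_eq rfl]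
      have e4 : AgenE (2 * ℓ + 1) v p 0 = -1 := by rw [AgenE_eval_SS (by omega) (by omega), SmatE_eval_gt (by omega)]
      have e5 : AgenE (2 * ℓ + 1) v p 1 = -1 := by rw [AgenE_eval_SS (by omega) (by omega), SmatE_eval_gt (by omega)]
      have f1 : px ℓ v p = 1 := px_mid (by omega) (by omega)
      have f2 : py ℓ v p = -1 := py_m (by omega) (by omega)
      have f3 : px ℓ v 1 = 0 := px_small (by omega) (by omega)
      have f4 : py ℓ v 1 = 0 := py_one hl
      have g : PTE ℓ v p 1 = 0 := by
        simp only [PTE]; rw [if_neg (by omega), if_neg (by omega)]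
      simp only [e1, e2, e3, e4, e5, h00, h01, h10, h11, f1, f2, f3, f4, g]
      ring
    · have e1 : AgenE (2 * ℓ + 1) v p q = SmatE p q := by rw [AgenE_eval_SS (by omega) (by omega)]
      have e2 : AgenE (2 * ℓ + 1) v 0 q = 1 := by rw [AgenE_eval_SS (by omega) (by omega), SmatE_eval_lt (by omega)]
      have e3 : AgenE (2 * ℓ + 1) v 1 q = 1 := by rw [AgenE_eval_SS (by omega) (by omega), SmatE_eval_lt (by omega)]
      have e4 : AgenE (2 * ℓ + 1) v p 0 = -1 := by rw [AgenE_eval_SS (by omega) (by omega), SmatE_eval_gt (by omega)]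
      have e5 : AgenE (2 * ℓ + 1) v p 1 = -1 := by rw [AgenE_eval_SS (by omega) (by omega), SmatE_eval_gt (by omega)]
      have f1 : px ℓ v p = 1 := px_mid (by omega) (by omega)
      have f2 : py ℓ v p = -1 := py_m (by omega) (by omega)
      have f3 : px ℓ v q = 1 := px_mid (by omega) (by omega)
      have f4 : py ℓ v q = -1 := py_m (by omega) (by omega)
      have g : PTE ℓ v p q = SmatE p q := by
        simp only [PTE]
        rw [if_neg (by omega), if_pos (by omega), AgenE_eval_SS (by omega) (by omega),
          SmatE_sub hp2 hq2]
      simp only [e1, e2, e3, e4, e5, h00, h01, h10, h11, f1, f2, f3, f4, g]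
      ring
    · have e1 : AgenE (2 * ℓ + 1) v p (2 * ℓ + 1) = v p := by rw [AgenE_eval_Sv (by omega) (by omega)]
      have e2 : AgenE (2 * ℓ + 1) v 0 (2 * ℓ + 1) = v 0 := by rw [AgenE_eval_Sv (by omega) (by omega)]
      have e3 : AgenE (2 * ℓ + 1) v 1 (2 * ℓ + 1) = v 1 := by rw [AgenE_eval_Sv (by omega) (by omega)]
      have e4 : AgenE (2 * ℓ + 1) v p 0 = -1 := by rw [AgenE_eval_SS (by omega) (by omega), SmatE_eval_gt (by omega)]
      have e5 : AgenE (2 * ℓ + 1) v p 1 = -1 := by rw [AgenE_eval_SS (by omega) (by omega), SmatE_eval_gt (by omega)]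
      have f1 : px ℓ v p = 1 := px_mid (by omega) (by omega)
      have f2 : py ℓ v p = -1 := py_m (by omega) (by omega)
      have f3 : px ℓ v (2 * ℓ + 1) = v 1 := px_last
      have f4 : py ℓ v (2 * ℓ + 1) = -(v 0) := py_last
      have g : PTE ℓ v p (2 * ℓ + 1) = v p + v 0 - v 1 := by
        simp only [PTE]
        rw [if_neg (by omega), if_pos (by omega), AgenE_eval_Sv (by omega) (by omega)]
        unfold vshift
        rw [show p - 2 + 2 = p by omega]
      simp only [e1, e2, e3, e4, e5, h00, h01, h10, h11, f1, f2, f3, f4, g]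
      ring
  · rcases (show q = 0 ∨ q = 1 ∨ (2 ≤ q ∧ q < 2 * ℓ + 1) ∨ q = 2 * ℓ + 1 by omega)
        with rfl | rfl | ⟨hq2, hqm⟩ | rfl
    · have e1 : AgenE (2 * ℓ + 1) v (2 * ℓ + 1) 0 = -(v 0) := by rw [AgenE_eval_vS (by omega) (by omega)]
      have e2 : AgenE (2 * ℓ + 1) v 0 0 = 0 := by rw [AgenE_eval_SS (by omega) (by omega), SmatE_eval_eq rfl]
      have e3 : AgenE (2 * ℓ + 1) v 1 0 = -1 := by rw [AgenE_eval_SS (by omega) (by omega), SmatE_eval_gt (by omega)]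
      have e4 : AgenE (2 * ℓ + 1) v (2 * ℓ + 1) 0 = -(v 0) := by rw [AgenE_eval_vS (by omega) (by omega)]
      have e5 : AgenE (2 * ℓ + 1) v (2 * ℓ + 1) 1 = -(v 1) := by rw [AgenE_eval_vS (by omega) (by omega)]
      have f1 : px ℓ v (2 * ℓ + 1) = v 1 := px_last
      have f2 : py ℓ v (2 * ℓ + 1) = -(v 0) := py_last
      have f3 : px ℓ v 0 = 0 := px_small (by omega) (by omega)
      have f4 : py ℓ v 0 = -1 := py_m (by omega) (by omega)
      have g : PTE ℓ v (2 * ℓ + 1) 0 = 0 := by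
        simp only [PTE]; rw [if_neg (by omega), if_neg (by omega)]
      simp only [e1, e2, e3, e4, e5, h00, h01, h10, h11, f1, f2, f3, f4, g]
      ring
    · have e1 : AgenE (2 * ℓ + 1) v (2 * ℓ + 1) 1 = -(v 1) := by rw [AgenE_eval_vS (by omega) (by omega)]
      have e2 : AgenE (2 * ℓ + 1) v 0 1 = 1 := by rw [AgenE_eval_SS (by omega) (by omega), SmatE_eval_lt (by omega)]
      have e3 : AgenE (2 * ℓ + 1) v 1 1 = 0 := by rw [AgenE_eval_SS (by omega) (by omega), SmatE_eval_eq rfl]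
      have e4 : AgenE (2 * ℓ + 1) v (2 * ℓ + 1) 0 = -(v 0) := by rw [AgenE_eval_vS (by omega) (by omega)]
      have e5 : AgenE (2 * ℓ + 1) v (2 * ℓ + 1) 1 = -(v 1) := by rw [AgenE_eval_vS (by omega) (by omega)]
      have f1 : px ℓ v (2 * ℓ + 1) = v 1 := px_last
      have f2 : py ℓ v (2 * ℓ + 1) = -(v 0) := py_last
      have f3 : px ℓ v 1 = 0 := px_small (by omega) (by omega)
      have f4 : py ℓ v 1 = 0 := py_one hl
      have g : PTE ℓ v (2 * ℓ + 1) 1 = 0 := by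
        simp only [PTE]; rw [if_neg (by omega), if_neg (by omega)]
      simp only [e1, e2, e3, e4, e5, h00, h01, h10, h11, f1, f2, f3, f4, g]
      ring
    · have e1 : AgenE (2 * ℓ + 1) v (2 * ℓ + 1) q = -(v q) := by rw [AgenE_eval_vS (by omega) (by omega)]
      have e2 : AgenE (2 * ℓ + 1) v 0 q = 1 := by rw [AgenE_eval_SS (by omega) (by omega), SmatE_eval_lt (by omega)]
      have e3 : AgenE (2 * ℓ + 1) v 1 q = 1 := by rw [AgenE_eval_SS (by omega) (by omega), SmatE_eval_lt (by omega)]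
      have e4 : AgenE (2 * ℓ + 1) v (2 * ℓ + 1) 0 = -(v 0) := by rw [AgenE_eval_vS (by omega) (by omega)]
      have e5 : AgenE (2 * ℓ + 1) v (2 * ℓ + 1) 1 = -(v 1) := by rw [AgenE_eval_vS (by omega) (by omega)]
      have f1 : px ℓ v (2 * ℓ + 1) = v 1 := px_last
      have f2 : py ℓ v (2 * ℓ + 1) = -(v 0) := py_last
      have f3 : px ℓ v q = 1 := px_mid (by omega) (by omega)
      have f4 : py ℓ v q = -1 := py_m (by omega) (by omega)
      have g : PTE ℓ v (2 * ℓ + 1) q = -(v q + v 0 - v 1) := by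
        simp only [PTE]
        rw [if_neg (by omega), if_pos (by omega), AgenE_eval_vS (by omega) (by omega)]
        unfold vshift
        rw [show q - 2 + 2 = q by omega]
      simp only [e1, e2, e3, e4, e5, h00, h01, h10, h11, f1, f2, f3, f4, g]
      ring
    · have e1 : AgenE (2 * ℓ + 1) v (2 * ℓ + 1) (2 * ℓ + 1) = 0 := by rw [AgenE_eval_vv (by omega) (by omega)]
      have e2 : AgenE (2 * ℓ + 1) v 0 (2 * ℓ + 1) = v 0 := by rw [AgenE_eval_Sv (by omega) (by omega)]
      have e3 : AgenE (2 * ℓ + 1) v 1 (2 * ℓ + 1) = v 1 := by rw [AgenE_eval_Sv (by omega) (by omega)]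
      have e4 : AgenE (2 * ℓ + 1) v (2 * ℓ + 1) 0 = -(v 0) := by rw [AgenE_eval_vS (by omega) (by omega)]
      have e5 : AgenE (2 * ℓ + 1) v (2 * ℓ + 1) 1 = -(v 1) := by rw [AgenE_eval_vS (by omega) (by omega)]
      have f1 : px ℓ v (2 * ℓ + 1) = v 1 := px_last
      have f2 : py ℓ v (2 * ℓ + 1) = -(v 0) := py_last
      have f3 : px ℓ v (2 * ℓ + 1) = v 1 := px_last
      have f4 : py ℓ v (2 * ℓ + 1) = -(v 0) := py_last
      have g : PTE ℓ v (2 * ℓ + 1) (2 * ℓ + 1) = 0 := by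
        simp only [PTE]
        rw [if_neg (by omega), if_pos (by omega), AgenE_eval_vv (by omega) (by omega)]
      simp only [e1, e2, e3, e4, e5, h00, h01, h10, h11, f1, f2, f3, f4, g]
      ring

theorem addT_inv {N : ℕ} (i0 i1 : Fin N) (x y : Fin N → ℤ) (h01 : i0 ≠ i1)
    (hx0 : x i0 = 0) (hx1 : x i1 = 0) (hy0 : y i0 = -1) (hy1 : y i1 = 0) :
    addT i0 i1 x y * addT i0 i1 (fun p => -x p) (fun p => -x p - y p) = 1 := by
  rw [addT_mul]
  ext p q
  simp only [Matrix.of_apply, addT, Matrix.one_apply, hx0, hx1, hy0, hy1]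
  rcases eq_or_ne q i0 with rfl | e0
  · simp [h01, Ne.symm h01, eq_comm]
    try ring
  · rcases eq_or_ne q i1 with rfl | e1
    · simp [h01, Ne.symm h01, e0, Ne.symm e0, eq_comm]
      try ring
    · simp [e0, e1, Ne.symm e0, Ne.symm e1]

theorem agen_peel (ℓ : ℕ) (hl : 1 ≤ ℓ) (v : ℕ → ℤ) :
    MatEquiv (Agen (ℓ + 1) v)
      (Matrix.of fun i j : Fin (2 * (ℓ + 1)) => PTE ℓ v (i : ℕ) (j : ℕ)) := by
  have h0 : (0 : ℕ) < 2 * (ℓ + 1) := by omega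
  have h1 : (1 : ℕ) < 2 * (ℓ + 1) := by omega
  refine ⟨addT ⟨0, h0⟩ ⟨1, h1⟩ (fun r => px ℓ v (r : ℕ)) (fun r => py ℓ v (r : ℕ)), ?_, ?_⟩
  · refine Matrix.isUnit_det_of_right_inverse (addT_inv _ _ _ _ ?_ ?_ ?_ ?_ ?_)
    · intro h
      have := congrArg Fin.val h
      simp at this
    · show px ℓ v 0 = 0
      exact px_small (by omega) (by omega)
    · show px ℓ v 1 = 0
      exact px_small (by omega) (by omega)
    · show py ℓ v 0 = -1
      exact py_m (by omega) (by omega)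
    · show py ℓ v 1 = 0
      exact py_one hl
  · rw [addT_mul, mul_addT_transpose]
    ext p q
    simp only [Matrix.of_apply, Agen]
    rw [show 2 * (ℓ + 1) - 1 = 2 * ℓ + 1 by omega]
    exact (peel_entry ℓ hl v (p : ℕ) (q : ℕ) (by omega) (by omega)).symm

def altsum (ℓ : ℕ) (v : ℕ → ℤ) : ℤ := ∑ p ∈ Finset.range (2 * ℓ - 1), (-1) ^ p * v p

theorem altsum_vshift (ℓ : ℕ) (hl : 1 ≤ ℓ) (v : ℕ → ℤ) :
    altsum ℓ (vshift v) = altsum (ℓ + 1) v := by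
  unfold altsum
  rw [show 2 * (ℓ + 1) - 1 = (2 * ℓ - 1) + 1 + 1 by omega, Finset.sum_range_succ',
    Finset.sum_range_succ']
  have key : (∑ p ∈ Finset.range (2 * ℓ - 1), (-1 : ℤ) ^ p * vshift v p)
      = (∑ p ∈ Finset.range (2 * ℓ - 1), (-1 : ℤ) ^ p * v (p + 1 + 1))
        + (∑ p ∈ Finset.range (2 * ℓ - 1), (-1 : ℤ) ^ p) * (v 0 - v 1) := by
    rw [Finset.sum_mul, ← Finset.sum_add_distrib]
    refine Finset.sum_congr rfl fun p _ => ?_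
    unfold vshift
    rw [show p + 2 = p + 1 + 1 from rfl]
    ring
  rw [key, neg_one_geom_sum, if_neg (by rw [Nat.even_sub (by omega)]; simp)]
  have h2 : ∀ p, ((-1 : ℤ)) ^ (p + 1 + 1) = (-1) ^ p := by
    intro p; rw [pow_succ, pow_succ]; ring
  simp only [h2]
  ring

theorem altsum_vvec (n ℓ : ℕ) (hn : 1 ≤ n) (hnl : n + 1 ≤ 2 * ℓ) :
    altsum ℓ (vvecE n ℓ) = (n : ℤ) := by
  unfold altsum
  rw [← Finset.sum_range_add_sum_Ico _ (show n ≤ 2 * ℓ - 1 by omega)]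
  have part1 : ∑ p ∈ Finset.range n, (-1 : ℤ) ^ p * vvecE n ℓ p = n := by
    have h : ∀ p ∈ Finset.range n, (-1 : ℤ) ^ p * vvecE n ℓ p = 1 := by
      intro p hp
      rw [Finset.mem_range] at hp
      unfold vvecE
      rw [if_pos hp, ← pow_add]
      exact Even.neg_one_pow ⟨p, by ring⟩
    rw [Finset.sum_congr rfl h]
    simp
  have part2 : ∑ p ∈ Finset.Ico n (2 * ℓ - 1), (-1 : ℤ) ^ p * vvecE n ℓ p = 0 := by
    rcases Nat.even_or_odd n with he | ho
    · have hle : n ≤ 2 * ℓ - 2 := by rcases he with ⟨t, ht⟩; omega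
      rw [show 2 * ℓ - 1 = (2 * ℓ - 2) + 1 by omega, Finset.sum_Ico_succ_top hle]
      have hv2 : vvecE n ℓ (2 * ℓ - 2) = 0 := by
        unfold vvecE
        rw [if_neg (by omega), if_pos ⟨rfl, he⟩]
      rw [hv2]
      have h : ∀ p ∈ Finset.Ico n (2 * ℓ - 2), (-1 : ℤ) ^ p * vvecE n ℓ p = (-1) ^ p := by
        intro p hp
        rw [Finset.mem_Ico] at hp
        unfold vvecE
        rw [if_neg (by omega), if_neg (fun h => by omega)]
        ring
      rw [Finset.sum_congr rfl h, Finset.sum_Ico_eq_sum_range,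
        Finset.sum_congr rfl (fun i _ => pow_add (-1 : ℤ) n i), ← Finset.mul_sum,
        neg_one_geom_sum,
        if_pos (by rw [Nat.even_sub hle]; constructor <;> intro <;>
          [exact he; exact ⟨ℓ - 1, by omega⟩])]
      simp
    · have h : ∀ p ∈ Finset.Ico n (2 * ℓ - 1), (-1 : ℤ) ^ p * vvecE n ℓ p = (-1) ^ p := by
        intro p hp
        rw [Finset.mem_Ico] at hp
        unfold vvecE
        rw [if_neg (by omega), if_neg (fun h => (Nat.not_even_iff_odd.mpr ho) h.2)]
        ring
      rw [Finset.sum_congr rfl h, Finset.sum_Ico_eq_sum_range,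
        Finset.sum_congr rfl (fun i _ => pow_add (-1 : ℤ) n i), ← Finset.mul_sum,
        neg_one_geom_sum,
        if_pos (by
          rw [Nat.even_sub (by omega)]
          constructor <;> intro h
          · exact absurd h (by
              have : Odd (2 * ℓ - 1) := ⟨ℓ - 1, by omega⟩
              exact Nat.not_even_iff_odd.mpr this)
          · exact absurd h (Nat.not_even_iff_odd.mpr ho))]
      simp
  rw [part1, part2, add_zero]

theorem PTE_block (ℓ : ℕ) (v : ℕ → ℤ) :
    (Matrix.of fun i j : Fin (2 * (ℓ + 1)) => PTE ℓ v (i : ℕ) (j : ℕ))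
      = Matrix.reindex
          (finSumFinEquiv.trans (finCongr (by simp only [List.length_singleton]; omega)))
          (finSumFinEquiv.trans (finCongr (by simp only [List.length_singleton]; omega)))
          (Matrix.fromBlocks (Dmat (2 * ([(1 : ℤ)].length)) [(1 : ℤ)]) 0 0
            (Agen ℓ (vshift v))) := by
  rw [eq_comm, Equiv.apply_eq_iff_eq_symm_apply, Matrix.reindex_symm]
  ext i j
  rcases i with i | i <;> rcases j with j | j <;>
    simp only [Matrix.reindex_apply, Matrix.submatrix_apply, Equiv.symm_symm,
      Equiv.trans_apply, finSumFinEquiv_apply_left, finSumFinEquiv_apply_right,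
      finCongr_apply, Fin.coe_cast, Fin.coe_castAdd, Fin.coe_natAdd,
      Matrix.fromBlocks_apply₁₁, Matrix.fromBlocks_apply₁₂, Matrix.fromBlocks_apply₂₁,
      Matrix.fromBlocks_apply₂₂, Matrix.of_apply, Matrix.zero_apply,
      List.length_singleton]
  · have hi : (i : ℕ) = 0 ∨ (i : ℕ) = 1 := by
      have := i.isLt; simp only [List.length_singleton] at this; omega
    have hj : (j : ℕ) = 0 ∨ (j : ℕ) = 1 := by
      have := j.isLt; simp only [List.length_singleton] at this; omega
    rcases hi with hi | hi <;> rcases hj with hj | hj <;>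
      simp [Dmat, PTE, hi, hj]
  · have hi : (i : ℕ) = 0 ∨ (i : ℕ) = 1 := by
      have := i.isLt; simp only [List.length_singleton] at this; omega
    simp only [PTE]
    rw [if_neg (by omega), if_neg (by omega)]
  · have hj : (j : ℕ) = 0 ∨ (j : ℕ) = 1 := by
      have := j.isLt; simp only [List.length_singleton] at this; omega
    simp only [PTE]
    rw [if_neg (by omega), if_neg (by omega)]
  · simp only [PTE, Agen, Matrix.of_apply]
    rw [if_neg (by omega), if_pos (by omega),
      show 2 * 1 + (i : ℕ) - 2 = (i : ℕ) by omega,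
      show 2 * 1 + (j : ℕ) - 2 = (j : ℕ) by omega]

theorem agen_equiv : ∀ ℓ, 1 ≤ ℓ → ∀ v : ℕ → ℤ,
    MatEquiv (Agen ℓ v) (Dmat (2 * ℓ) (List.replicate (ℓ - 1) (1 : ℤ) ++ [altsum ℓ v])) := by
  intro ℓ
  induction ℓ with
  | zero => intro h; exact absurd h (by omega)
  | succ ℓ ih =>
    intro _ v
    rcases Nat.eq_zero_or_pos ℓ with rfl | hl
    · apply matEquiv_of_eq
      ext i j
      fin_cases i <;> fin_cases j <;>
        simp (config := { decide := true }) [Agen, AgenE, SmatE, Dmat, altsum,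
          Finset.sum_range_one]
    · refine (agen_peel ℓ hl v).trans ?_
      rw [PTE_block ℓ v, my_reindex_trans]
      refine ((matEquiv_reindex _ (matEquiv_reindex _
        (matEquiv_fromBlocks (matEquiv_of_eq rfl) (ih hl (vshift v)))))).trans ?_
      apply matEquiv_of_eq
      rw [dmat_append', dmat_cast, altsum_vshift ℓ hl v]
      congr 1
      rw [← List.append_assoc, show ([(1:ℤ)] : List ℤ) = List.replicate 1 (1:ℤ) from rfl,
        ← List.replicate_add, show 1 + (ℓ - 1) = ℓ + 1 - 1 by omega]

theorem Amat_eq_Agen (n ℓ : ℕ) : Amat n ℓ = Agen ℓ (vvecE n ℓ) := rfl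

theorem amat_equiv (n ℓ : ℕ) (hn : 0 < n) (hnl : n + 1 ≤ 2 * ℓ) :
    MatEquiv (Amat n ℓ) (Dmat (2 * ℓ) (List.replicate (ℓ - 1) (1 : ℤ) ++ [(n : ℤ)])) := by
  have := agen_equiv ℓ (by omega) (vvecE n ℓ)
  rw [altsum_vvec n ℓ hn hnl] at this
  rw [Amat_eq_Agen]
  exact this

theorem AmatE_antisym (n ℓ p q : ℕ) : AmatE n ℓ q p = -AmatE n ℓ p q := by
  unfold AmatE SmatE
  split_ifs <;> first | omega | ring

theorem amat_antisym (n ℓ : ℕ) : (Amat n ℓ)ᵀ = -(Amat n ℓ) := by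
  ext i j
  simp only [Matrix.transpose_apply, Matrix.neg_apply, Amat, Matrix.of_apply]
  exact AmatE_antisym n ℓ (i : ℕ) (j : ℕ)

theorem my_reindex_neg {m o : Type*} (e : m ≃ o) (M : Matrix m m ℤ) :
    Matrix.reindex e e (-M) = -(Matrix.reindex e e M) := by
  ext i j
  simp [Matrix.reindex_apply]

theorem antisym_reindex_block {m n o : Type*} (e : m ⊕ n ≃ o)
    (B : Matrix m m ℤ) (A : Matrix n n ℤ) (C : Matrix m n ℤ)
    (hB : Bᵀ = -B) (hA : Aᵀ = -A) :
    (Matrix.reindex e e (Matrix.fromBlocks B C (-Cᵀ) A))ᵀ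
      = -(Matrix.reindex e e (Matrix.fromBlocks B C (-Cᵀ) A)) := by
  have hfb : -(Matrix.fromBlocks B C (-Cᵀ) A) = Matrix.fromBlocks (-B) (-C) Cᵀ (-A) := by
    rw [Matrix.fromBlocks_neg, neg_neg]
  rw [Matrix.transpose_reindex, Matrix.fromBlocks_transpose, hB, hA, Matrix.transpose_neg,
    Matrix.transpose_transpose, ← my_reindex_neg, hfb]

theorem bmat_antisym (ℓ : ℕ) (ν : ℕ → ℕ) : ∀ k, (Bmat ℓ ν k)ᵀ = -(Bmat ℓ ν k) := by
  intro k
  induction k with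
  | zero => simp [Bmat]
  | succ k ih =>
    simp only [Bmat]
    exact antisym_reindex_block _ _ _ _ ih (amat_antisym (ν k) ℓ)

theorem clearC {m n : Type*} [Fintype m] [DecidableEq m] [Fintype n] [DecidableEq n]
    (B : Matrix m m ℤ) (A : Matrix n n ℤ) (C : Matrix m n ℤ) (i₀ : m)
    (hB : Bᵀ = -B) (hC : ∀ i j, C i j = B i i₀) :
    MatEquiv (Matrix.fromBlocks B C (-Cᵀ) A) (Matrix.fromBlocks B 0 0 A) := by
  have hanti : ∀ i j, B j i = -B i j := by
    intro i j
    have := congrFun (congrFun hB i) j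
    simpa [Matrix.transpose_apply] using this
  have hdiag : B i₀ i₀ = 0 := by have := hanti i₀ i₀; omega
  set X : Matrix n m ℤ := Matrix.of fun _ c => -(if c = i₀ then (1 : ℤ) else 0) with hX
  have hXB : X * B = Cᵀ := by
    ext r c
    simp only [Matrix.mul_apply, hX, Matrix.of_apply, Matrix.transpose_apply, hC]
    simp [ite_mul, Finset.sum_ite_eq, hanti i₀ c]
  have hBXt : B * Xᵀ = -C := by
    ext r c
    simp only [Matrix.mul_apply, hX, Matrix.of_apply, Matrix.transpose_apply,
      Matrix.neg_apply, hC]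
    simp [mul_ite, Finset.sum_ite_eq']
  have hXC : X * C = 0 := by
    ext r c
    simp only [Matrix.mul_apply, hX, Matrix.of_apply, Matrix.zero_apply, hC]
    simp [ite_mul, Finset.sum_ite_eq, hdiag]
  refine ⟨Matrix.fromBlocks 1 0 X 1, ?_, ?_⟩
  · rw [Matrix.det_fromBlocks_zero₁₂]
    simp
  · rw [Matrix.fromBlocks_transpose, Matrix.fromBlocks_multiply, Matrix.fromBlocks_multiply,
      Matrix.transpose_one, Matrix.transpose_zero]
    simp only [Matrix.one_mul, Matrix.mul_one, Matrix.zero_mul, Matrix.mul_zero,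
      add_zero, zero_add, hXB, hBXt, hXC]
    simp

theorem bmat_step (ℓ : ℕ) (ν : ℕ → ℕ) (k : ℕ) :
    MatEquiv (Bmat ℓ ν (k + 1))
      (Matrix.reindex (finSumFinEquiv.trans (finCongr (by ring)))
        (finSumFinEquiv.trans (finCongr (by ring)))
        (Matrix.fromBlocks (Bmat ℓ ν k) 0 0 (Amat (ν k) ℓ))) := by
  simp only [Bmat]
  apply matEquiv_reindex
  rcases Nat.eq_zero_or_pos (2 * ℓ * k) with h0 | hpos
  · apply matEquiv_of_eq
    ext i j
    rcases i with i | i <;> rcases j with j | j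
    · rfl
    · exact absurd i.isLt (by omega)
    · exact absurd j.isLt (by omega)
    · rfl
  · have h2 : 0 < 2 * ℓ := by
      rcases Nat.eq_zero_or_pos ℓ with rfl | h
      · simp at hpos
      · omega
    have hk : k - 1 < 2 * ℓ * k := by
      have hkk : 0 < k := by
        rcases Nat.eq_zero_or_pos k with rfl | h
        · simp at hpos
        · exact h
      have := Nat.le_mul_of_pos_left k h2
      omega
    exact clearC _ _ _ ⟨k - 1, hk⟩ (bmat_antisym ℓ ν k)
      (fun i j => by simp only [Matrix.of_apply]; rw [dif_pos hk])

def Lj (ℓ : ℕ) (ν : ℕ → ℕ) (k : ℕ) : List ℤ :=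
  ((List.range k).map fun i => List.replicate (ℓ - 1) (1 : ℤ) ++ [(ν i : ℤ)]).flatten

theorem Lj_succ (ℓ : ℕ) (ν : ℕ → ℕ) (k : ℕ) :
    Lj ℓ ν (k + 1) = Lj ℓ ν k ++ (List.replicate (ℓ - 1) (1 : ℤ) ++ [(ν k : ℤ)]) := by
  simp [Lj, List.range_succ]

theorem Lj_length (ℓ : ℕ) (ν : ℕ → ℕ) (hl : 1 ≤ ℓ) :
    ∀ k, (Lj ℓ ν k).length = ℓ * k := by
  intro k
  induction k with
  | zero => simp [Lj]
  | succ k ih =>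
    rw [Lj_succ, List.length_append, ih, Nat.mul_succ]
    simp
    omega

theorem dmat_append'' (L₁ L₂ : List ℤ) (M N : ℕ) (h : 2 * L₁.length = N) :
    Matrix.reindex finSumFinEquiv finSumFinEquiv
      (Matrix.fromBlocks (Dmat N L₁) 0 0 (Dmat M L₂)) = Dmat (N + M) (L₁ ++ L₂) := by
  subst h
  exact dmat_append' L₁ L₂ M

theorem bmat_equiv_joined (ℓ : ℕ) (hl : 1 ≤ ℓ) (ν : ℕ → ℕ) :
    ∀ k, (∀ i < k, 0 < ν i) → (∀ i < k, ν i + 1 ≤ 2 * ℓ) →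
      MatEquiv (Bmat ℓ ν k) (Dmat (2 * ℓ * k) (Lj ℓ ν k)) := by
  intro k
  induction k with
  | zero =>
    intro _ _
    apply matEquiv_of_eq
    ext i j
    exact absurd i.isLt (by omega)
  | succ k ih =>
    intro hν hℓν
    refine (bmat_step ℓ ν k).trans ?_
    refine (matEquiv_reindex _ (matEquiv_fromBlocks
      (ih (fun i hi => hν i (by omega)) (fun i hi => hℓν i (by omega)))
      (amat_equiv (ν k) ℓ (hν k (by omega)) (hℓν k (by omega))))).trans ?_
    apply matEquiv_of_eq
    rw [my_reindex_trans, dmat_append'' _ _ _ _ (by rw [Lj_length ℓ ν hl]; ring), dmat_cast,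
      Lj_succ]

theorem lj_perm (ℓ : ℕ) (ν : ℕ → ℕ) : ∀ k,
    (Lj ℓ ν k).Perm
      (List.replicate (k * (ℓ - 1)) (1 : ℤ) ++ (List.range k).map fun i => (ν i : ℤ)) := by
  have h4 : ∀ A B C D : List ℤ, ((A ++ B) ++ (C ++ D)).Perm ((A ++ C) ++ (B ++ D)) := by
    intro A B C D
    have h1 : ((A ++ B) ++ (C ++ D)) = A ++ ((B ++ C) ++ D) := by simp [List.append_assoc]
    have h2 : ((A ++ C) ++ (B ++ D)) = A ++ ((C ++ B) ++ D) := by simp [List.append_assoc]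
    rw [h1, h2]
    exact List.Perm.append_left A ((List.perm_append_comm).append_right D)
  intro k
  induction k with
  | zero => simp [Lj]
  | succ k ih =>
    rw [Lj_succ]
    refine (ih.append_right _).trans ?_
    refine (h4 _ _ _ _).trans ?_
    rw [← List.replicate_add, show k * (ℓ - 1) + (ℓ - 1) = (k + 1) * (ℓ - 1) by ring,
      List.range_succ, List.map_append, List.map_singleton]

theorem Bmat_equiv_Dmat (k ℓ : ℕ) (ν : ℕ → ℕ) (hk : 0 < k)
    (hν : ∀ i < k, 0 < ν i) (hℓ : ∀ i < k, ν i + 1 ≤ 2 * ℓ) (hkℓ : k ≤ 2 * ℓ) :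
    MatEquiv (Bmat ℓ ν k)
      (Dmat (2 * ℓ * k)
        (List.replicate (k * (ℓ - 1)) (1 : ℤ) ++ (List.range k).map fun i => (ν i : ℤ))) := by
  have hl : 1 ≤ ℓ := by omega
  exact (bmat_equiv_joined ℓ hl ν k hν hℓ).trans
    (dmat_perm (lj_perm ℓ ν k) (2 * ℓ * k)
      (by rw [Lj_length ℓ ν hl]; exact le_of_eq (by ring)))
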